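/- Every finite group of order 2·p·q^n, where p and q are odd primes and n ≥ 0, is solvable. -/

import Mathlib

open Subgroup

universe u

section Helpers

variable {G : Type u} [Group G]

lemma card_lt_card_of_lt [Finite G] {H K : Subgroup G} (h : H < K) :
    Nat.card H < Nat.card K := by
  have : (H : Set G) ⊂ (K : Set G) := SetLike.coe_ssubset_coe.mpr h
  have h' := Set.ncard_strictMono this
  rw [← Nat.card_coe_set_eq, ← Nat.card_coe_set_eq] at h'
  exact h'

/-- Normalizer growth in a `q`-group: if `D < K` with `K` a `q`-group, there is an element of
`K` outside `D` normalizing `D`. -/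
lemma exists_mem_normalizer [Finite G] {q : ℕ} [Fact q.Prime] {K D : Subgroup G}
    (hK : IsPGroup q K) (hDK : D < K) :
    ∃ x : G, x ∈ K ∧ x ∉ D ∧ x ∈ Subgroup.normalizer (D : Set G) := by
  haveI : Group.IsNilpotent K := hK.isNilpotent
  have hnc : NormalizerCondition K := normalizerCondition_of_isNilpotent
  have hlt : D.subgroupOf K < ⊤ := by
    rw [lt_top_iff_ne_top]
    intro htop
    rw [subgroupOf_eq_top] at htop
    exact absurd (le_antisymm hDK.le htop) hDK.ne
  obtain ⟨x, hx1, hx2⟩ := SetLike.exists_of_lt (hnc _ hlt)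
  refine ⟨(x : G), x.2, by simpa [mem_subgroupOf] using hx2, ?_⟩
  rw [mem_normalizer_iff]
  intro h
  constructor
  · intro hh
    have hhK : h ∈ K := hDK.le hh
    have : (⟨h, hhK⟩ : K) ∈ D.subgroupOf K := by simpa [mem_subgroupOf]
    have := (mem_normalizer_iff.mp hx1 ⟨h, hhK⟩).mp this
    simpa [mem_subgroupOf] using this
  · intro hh
    have hconjK : (x : G) * h * (x : G)⁻¹ ∈ K := hDK.le hh
    have hhK : h ∈ K := by
      have := K.mul_mem (K.mul_mem (K.inv_mem x.2) hconjK) x.2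
      simpa [mul_assoc] using this
    have : (⟨h, hhK⟩ : K) ∈ D.subgroupOf K := by
      apply (mem_normalizer_iff.mp hx1 ⟨h, hhK⟩).mpr
      simpa [mem_subgroupOf] using hh
    simpa [mem_subgroupOf] using this

end Helpers


/-- Every finite group whose order divides `p * q ^ n` (p, q distinct primes) is solvable. -/
lemma solvable_of_card_dvd_p_mul_q_pow {p q : ℕ} (hp : p.Prime) (hq : q.Prime) (hpq : p ≠ q)
    (n : ℕ) : ∀ c : ℕ, ∀ (G : Type u) (_ : Group G) (_ : Finite G),
      Nat.card G = c → c ∣ p * q ^ n → IsSolvable G := by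
  intro c
  induction c using Nat.strong_induction_on with
  | _ c IH =>
  intro G _ _ hc hdvd
  haveI : Fact p.Prime := ⟨hp⟩
  haveI : Fact q.Prime := ⟨hq⟩
  by_cases hpc : p ∣ c
  case neg =>
    -- q-group case
    have hcop : Nat.Coprime c p := (hp.coprime_iff_not_dvd.mpr hpc).symm
    have hcq : c ∣ q ^ n := hcop.dvd_of_dvd_mul_right (by rwa [mul_comm] at hdvd)
    obtain ⟨i, -, hci⟩ := (Nat.dvd_prime_pow hq).mp hcq
    have hG : IsPGroup q G := IsPGroup.of_card (hc.trans hci)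
    haveI := hG.isNilpotent
    exact (inferInstance : Group.IsSolvable G)
  case pos =>
  obtain ⟨m, hm⟩ := hpc
  have hmq : m ∣ q ^ n := by
    rw [hm] at hdvd
    exact (mul_dvd_mul_iff_left hp.pos.ne').mp hdvd
  obtain ⟨a, han, ham⟩ := (Nat.dvd_prime_pow hq).mp hmq
  subst ham hm
  rcases Nat.eq_zero_or_pos a with rfl | hapos
  · -- |G| = p
    have hG : IsPGroup p G := IsPGroup.of_card (n := 1) (by rw [hc]; simp)
    haveI := hG.isNilpotent
    exact (inferInstance : Group.IsSolvable G)
  have hcard : Nat.card G = p * q ^ a := hc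
  by_cases hsimple : ∃ N : Subgroup G, N.Normal ∧ N ≠ ⊥ ∧ N ≠ ⊤
  · obtain ⟨N, hNn, hNbot, hNtop⟩ := hsimple
    haveI := hNn
    have hcN : Nat.card N ∣ p * q ^ a := hcard ▸ N.card_subgroup_dvd_card
    have hcQ : Nat.card (G ⧸ N) ∣ p * q ^ a := hcard ▸ N.card_quotient_dvd_card
    have hprod : Nat.card G = Nat.card (G ⧸ N) * Nat.card N :=
      Subgroup.card_eq_card_quotient_mul_card_subgroup N
    have hNlt : Nat.card N < p * q ^ a := by
      refine lt_of_le_of_ne (Nat.le_of_dvd (by have := hp.pos; have := hq.pos; positivity) hcN) fun h => hNtop ?_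
      exact Subgroup.eq_top_of_card_eq N (by rw [h, hcard])
    have hN2 : 2 ≤ Nat.card N := (Subgroup.one_lt_card_iff_ne_bot N).mpr hNbot
    have hQlt : Nat.card (G ⧸ N) < p * q ^ a := by
      rw [hcard] at hprod
      have hQpos : 0 < Nat.card (G ⧸ N) := Nat.card_pos
      calc Nat.card (G ⧸ N) < Nat.card (G ⧸ N) * 2 := by omega
        _ ≤ Nat.card (G ⧸ N) * Nat.card N := Nat.mul_le_mul_left _ hN2
        _ = p * q ^ a := hprod.symm
    have s1 : Group.IsSolvable N :=
      IH _ hNlt N _ inferInstance rfl (hcN.trans (mul_dvd_mul_left p (pow_dvd_pow q han)))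
    have s2 : Group.IsSolvable (G ⧸ N) :=
      IH _ hQlt (G ⧸ N) _ inferInstance rfl (hcQ.trans (mul_dvd_mul_left p (pow_dvd_pow q han)))
    exact solvable_of_ker_le_range N.subtype (QuotientGroup.mk' N)
      (by rw [QuotientGroup.ker_mk', Subgroup.range_subtype])
  push_neg at hsimple
  exfalso
  -- now G is simple (no nontrivial proper normal subgroup); derive a contradiction
  have hqa1 : 1 < q ^ a := Nat.one_lt_pow hapos.ne' hq.one_lt
  have hfq : (p * q ^ a).factorization q = a := by
    rw [Nat.factorization_mul hp.pos.ne' (pow_ne_zero _ hq.pos.ne'),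
      hq.factorization_pow]
    simp [hp.factorization, Finsupp.single_apply, hpq]
  have hfp : (p * q ^ a).factorization p = 1 := by
    rw [Nat.factorization_mul hp.pos.ne' (pow_ne_zero _ hq.pos.ne'),
      hq.factorization_pow]
    simp [hp.factorization, Finsupp.single_apply, Ne.symm hpq]
  have hsylqcard : ∀ Q : Sylow q G, Nat.card Q = q ^ a := fun Q => by
    rw [Sylow.card_eq_multiplicity, hcard, hfq]
  have hsylpcard : ∀ P : Sylow p G, Nat.card P = p := fun P => by
    rw [Sylow.card_eq_multiplicity, hcard, hfp, pow_one]
  -- distinct Sylow q-subgroups are incomparable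
  have hqle : ∀ Q1 Q2 : Sylow q G, (Q1 : Subgroup G) ≤ (Q2 : Subgroup G) → Q1 = Q2 := by
    intro Q1 Q2 hle
    have := Subgroup.eq_of_le_of_card_ge hle (by rw [hsylqcard, hsylqcard])
    exact Sylow.ext this
  have hple : ∀ P1 P2 : Sylow p G, (P1 : Subgroup G) ≤ (P2 : Subgroup G) → P1 = P2 := by
    intro P1 P2 hle
    have := Subgroup.eq_of_le_of_card_ge hle (by rw [hsylpcard, hsylpcard])
    exact Sylow.ext this
  -- no Sylow subgroup is normal
  have hnotnormal_q : ∀ Q : Sylow q G, ¬ (Q : Subgroup G).Normal := by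
    intro Q hn
    have hQbot : (Q : Subgroup G) ≠ ⊥ := by
      intro hb
      have := hsylqcard Q
      rw [hb, Subgroup.card_bot] at this
      omega
    have htop := hsimple _ hn hQbot
    have h1 : Nat.card (Q : Subgroup G) = Nat.card G := by rw [htop, Subgroup.card_top]
    rw [hsylqcard, hcard] at h1
    nlinarith [hp.two_le, pow_pos hq.pos a]
  have hnotnormal_p : ∀ P : Sylow p G, ¬ (P : Subgroup G).Normal := by
    intro P hn
    have hPbot : (P : Subgroup G) ≠ ⊥ := by
      intro hb
      have := hsylpcard P
      rw [hb, Subgroup.card_bot] at this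
      have := hp.two_le
      omega
    have htop := hsimple _ hn hPbot
    have h1 : Nat.card (P : Subgroup G) = Nat.card G := by rw [htop, Subgroup.card_top]
    rw [hsylpcard, hcard] at h1
    nlinarith [hp.two_le, pow_pos hq.pos a, hqa1]
  -- number of Sylow q-subgroups is p
  have hidxq : ∀ Q : Sylow q G, (Q : Subgroup G).index = p := by
    intro Q
    have h1 := Subgroup.card_mul_index (Q : Subgroup G)
    rw [hsylqcard Q, hcard, mul_comm p] at h1
    exact Nat.eq_of_mul_eq_mul_left (pow_pos hq.pos a) h1
  have hnq : Nat.card (Sylow q G) = p := by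
    have Q := Classical.arbitrary (Sylow q G)
    have h1 : Nat.card (Sylow q G) ∣ p := hidxq Q ▸ Sylow.card_dvd_index Q
    rcases (Nat.dvd_prime hp).mp h1 with h | h
    · exfalso
      apply hnotnormal_q Q
      rw [← Subgroup.normalizer_eq_top_iff, ← Subgroup.index_eq_one]
      refine (Sylow.card_eq_index_normalizer Q).symm.trans ?_
      exact h
    · exact h
  -- two distinct Sylow p-subgroups exist
  obtain ⟨P1, P2, hP12⟩ : ∃ P1 P2 : Sylow p G, P1 ≠ P2 := by
    by_contra hcontra
    push_neg at hcontra
    have P := Classical.arbitrary (Sylow p G)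
    apply hnotnormal_p P
    rw [← Subgroup.normalizer_eq_top_iff, ← Subgroup.index_eq_one]
    refine (Sylow.card_eq_index_normalizer P).symm.trans ?_
    have : Subsingleton (Sylow p G) := ⟨hcontra⟩
    exact Nat.card_eq_one_iff_unique.mpr ⟨this, ⟨P⟩⟩
  by_cases hinter : ∀ Q1 Q2 : Sylow q G, Q1 ≠ Q2 → (Q1 : Subgroup G) ⊓ (Q2 : Subgroup G) = ⊥
  · -- Case A : counting elements
    classical
    letI : Fintype G := Fintype.ofFinite G
    letI : Fintype (Sylow q G) := Fintype.ofFinite _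
    have hPinter : (P1 : Subgroup G) ⊓ (P2 : Subgroup G) = ⊥ := by
      have hle : ((P1 : Subgroup G) ⊓ (P2 : Subgroup G)) ≤ (P1 : Subgroup G) := inf_le_left
      have hd : Nat.card ((P1 : Subgroup G) ⊓ (P2 : Subgroup G) : Subgroup G) ∣ p := by
        have h2 := Subgroup.card_dvd_of_le hle
        rwa [hsylpcard P1] at h2
      rcases (Nat.dvd_prime hp).mp hd with h1 | h1
      · exact Subgroup.card_eq_one.mp h1
      · exfalso
        apply hP12
        apply hple
        have := Subgroup.eq_of_le_of_card_ge hle (by rw [hsylpcard P1, h1])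
        rw [← this]
        exact inf_le_right
    -- the finset of nontrivial elements of a subgroup
    let es : Subgroup G → Finset G := fun H => (H : Set G).toFinset.erase 1
    have hes_card : ∀ H : Subgroup G, (es H).card = Nat.card H - 1 := by
      intro H
      rw [Finset.card_erase_of_mem (Set.mem_toFinset.mpr H.one_mem), Set.toFinset_card]
      rw [Nat.card_eq_fintype_card]
      rfl
    have hes_mem : ∀ (H : Subgroup G) (x : G), x ∈ es H ↔ x ∈ H ∧ x ≠ 1 := by
      intro H x
      simp [es, and_comm]
    -- union of nontrivial elements of Sylow q-subgroups
    let T : Finset G := Finset.univ.biUnion (fun Q : Sylow q G => es (Q : Subgroup G))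
    have hTcard : T.card = p * (q ^ a - 1) := by
      rw [Finset.card_biUnion]
      · have hQc : ∀ Q : Sylow q G, (es (Q : Subgroup G)).card = q ^ a - 1 := fun Q => by
          rw [hes_card, hsylqcard Q]
        rw [Finset.sum_congr rfl (fun Q _ => hQc Q), Finset.sum_const, Finset.card_univ,
          smul_eq_mul, ← Nat.card_eq_fintype_card, hnq]
      · intro Q1 _ Q2 _ hne
        rw [Function.onFun, Finset.disjoint_left]
        intro x hx1 hx2
        rw [hes_mem] at hx1 hx2
        have : x ∈ (Q1 : Subgroup G) ⊓ (Q2 : Subgroup G) := ⟨hx1.1, hx2.1⟩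
        rw [hinter Q1 Q2 hne] at this
        exact hx1.2 this
    let B : Finset G := es (P1 : Subgroup G) ∪ es (P2 : Subgroup G)
    have hBcard : B.card = 2 * (p - 1) := by
      rw [Finset.card_union_of_disjoint, hes_card, hes_card, hsylpcard, hsylpcard]
      · ring
      · rw [Finset.disjoint_left]
        intro x hx1 hx2
        rw [hes_mem] at hx1 hx2
        have : x ∈ (P1 : Subgroup G) ⊓ (P2 : Subgroup G) := ⟨hx1.1, hx2.1⟩
        rw [hPinter] at this
        exact hx1.2 this
    have hTB : Disjoint T B := by
      rw [Finset.disjoint_left]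
      intro x hxT hxB
      simp only [T, Finset.mem_biUnion] at hxT
      obtain ⟨Q, -, hxQ⟩ := hxT
      rw [hes_mem] at hxQ
      have ho1 : orderOf x ∣ q ^ a := (hsylqcard Q) ▸ Subgroup.orderOf_dvd_natCard _ hxQ.1
      have ho2 : orderOf x ∣ p := by
        rcases Finset.mem_union.mp hxB with hx | hx <;> rw [hes_mem] at hx
        · exact (hsylpcard P1) ▸ Subgroup.orderOf_dvd_natCard _ hx.1
        · exact (hsylpcard P2) ▸ Subgroup.orderOf_dvd_natCard _ hx.1
      have hcop : Nat.Coprime (q ^ a) p :=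
        Nat.Coprime.pow_left _ ((Nat.coprime_primes hq hp).mpr (Ne.symm hpq))
      have : orderOf x ∣ 1 := Nat.dvd_one.mpr (Nat.eq_one_of_dvd_coprimes hcop ho1 ho2)
      rw [Nat.dvd_one, orderOf_eq_one_iff] at this
      exact hxQ.2 this
    have h1TB : (1 : G) ∉ T ∪ B := by
      intro hmem
      rcases Finset.mem_union.mp hmem with hx | hx
      · simp only [T, Finset.mem_biUnion] at hx
        obtain ⟨Q, -, hxQ⟩ := hx
        exact ((hes_mem _ _).mp hxQ).2 rfl
      · rcases Finset.mem_union.mp hx with hx' | hx' <;>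
          exact ((hes_mem _ _).mp hx').2 rfl
    have hle : (insert (1 : G) (T ∪ B)).card ≤ Fintype.card G := Finset.card_le_univ _
    rw [Finset.card_insert_of_notMem h1TB, Finset.card_union_of_disjoint hTB,
      hTcard, hBcard] at hle
    rw [← Nat.card_eq_fintype_card, hcard] at hle
    have hmulsub : p * (q ^ a - 1) = p * q ^ a - p := by rw [Nat.mul_sub, mul_one]
    rw [hmulsub] at hle
    have hple' : p ≤ p * q ^ a := Nat.le_mul_of_pos_right p (pow_pos hq.pos a)
    have hp2 := hp.two_le
    omega
  · -- Case B : maximal intersection argument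
    classical
    push_neg at hinter
    obtain ⟨Q1', Q2', hne', hbot'⟩ := hinter
    letI : Fintype (Sylow q G) := Fintype.ofFinite _
    let f : Sylow q G × Sylow q G → ℕ := fun R =>
      if R.1 ≠ R.2 then Nat.card ((R.1 : Subgroup G) ⊓ (R.2 : Subgroup G) : Subgroup G) else 0
    obtain ⟨⟨R1, R2⟩, -, hmax⟩ :=
      Finset.exists_max_image Finset.univ f ⟨(Q1', Q2'), Finset.mem_univ _⟩
    have hfQ' : 2 ≤ f (Q1', Q2') := by
      simp only [f, ne_eq, hne', not_false_eq_true, if_true, if_pos]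
      exact (Subgroup.one_lt_card_iff_ne_bot _).mpr hbot'
    have hfR : 2 ≤ f (R1, R2) := le_trans hfQ' (hmax _ (Finset.mem_univ _))
    have hR12 : R1 ≠ R2 := by
      intro hEq
      rw [show f (R1, R2) = 0 from if_neg (by simp [hEq])] at hfR
      omega
    set D : Subgroup G := (R1 : Subgroup G) ⊓ (R2 : Subgroup G) with hDdef
    have hfR' : f (R1, R2) = Nat.card D := if_pos hR12
    rw [hfR'] at hfR
    have hDbot : D ≠ ⊥ := by
      rw [← Subgroup.one_lt_card_iff_ne_bot]
      omega
    have hmax' : ∀ S1 S2 : Sylow q G, S1 ≠ S2 →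
        Nat.card ((S1 : Subgroup G) ⊓ (S2 : Subgroup G) : Subgroup G) ≤ Nat.card D := by
      intro S1 S2 hne
      have h1 := hmax (S1, S2) (Finset.mem_univ _)
      rwa [hfR', show f (S1, S2) = _ from if_pos hne] at h1
    have hDlt1 : D < (R1 : Subgroup G) := by
      refine lt_of_le_of_ne inf_le_left fun hEq => hR12 (hqle R1 R2 ?_)
      rw [← hEq]; exact inf_le_right
    have hDlt2 : D < (R2 : Subgroup G) := by
      refine lt_of_le_of_ne inf_le_right fun hEq => hR12 ((hqle R2 R1 ?_).symm)
      rw [← hEq]; exact inf_le_left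
    obtain ⟨x, hxR1, hxD, hxN⟩ := exists_mem_normalizer R1.isPGroup' hDlt1
    obtain ⟨y, hyR2, hyD, hyN⟩ := exists_mem_normalizer R2.isPGroup' hDlt2
    set N : Subgroup G := Subgroup.normalizer (D : Set G) with hNdef
    have hpN : p ∣ Nat.card N := by
      by_contra hpN
      have hcop : Nat.Coprime (Nat.card N) p := (hp.coprime_iff_not_dvd.mpr hpN).symm
      have hdN : Nat.card N ∣ q ^ a * p := by
        rw [mul_comm]
        exact hcard ▸ Subgroup.card_subgroup_dvd_card N
      have hNq : Nat.card N ∣ q ^ a := hcop.dvd_of_dvd_mul_right hdN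
      obtain ⟨i, -, hNi⟩ := (Nat.dvd_prime_pow hq).mp hNq
      have hNpg : IsPGroup q N := IsPGroup.of_card hNi
      obtain ⟨Q3, hNQ3⟩ := hNpg.exists_le_sylow
      have key : ∀ R : Sylow q G, D < (R : Subgroup G) →
          (∃ z : G, z ∈ (R : Subgroup G) ∧ z ∉ D ∧ z ∈ N) → R = Q3 := by
        intro R hDR ⟨z, hz1, hz2, hz3⟩
        by_contra hne
        have hlt : D < (R : Subgroup G) ⊓ (Q3 : Subgroup G) := by
          refine lt_of_le_of_ne (le_inf hDR.le (le_trans Subgroup.le_normalizer hNQ3)) ?_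
          intro hEq
          exact hz2 (hEq ▸ (⟨hz1, hNQ3 hz3⟩ : z ∈ (R : Subgroup G) ⊓ (Q3 : Subgroup G)))
        have h1 := card_lt_card_of_lt hlt
        have h2 := hmax' R Q3 hne
        omega
      have hRQ1 : R1 = Q3 := key R1 hDlt1 ⟨x, hxR1, hxD, hxN⟩
      have hRQ2 : R2 = Q3 := key R2 hDlt2 ⟨y, hyR2, hyD, hyN⟩
      exact hR12 (hRQ1.trans hRQ2.symm)
    -- get an element of order p in the normalizer
    obtain ⟨u, hu⟩ := exists_prime_orderOf_dvd_card' (G := N) p hpN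
    set g : G := (u : G) with hgdef
    have hgord : orderOf g = p := by
      rw [← hu]
      exact orderOf_injective N.subtype N.subtype_injective u
    have hgN : g ∈ N := u.2
    set P : Subgroup G := Subgroup.zpowers g with hPdef
    have hPcard : Nat.card P = p := by rw [Nat.card_zpowers, hgord]
    have hcomp : Subgroup.IsComplement' (R1 : Subgroup G) P := by
      apply Subgroup.isComplement'_of_coprime
      · rw [hsylqcard R1, hPcard, hcard, mul_comm]
      · rw [hsylqcard R1, hPcard]
        exact Nat.Coprime.pow_left _ ((Nat.coprime_primes hq hp).mpr (Ne.symm hpq))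
    have hKR1 : Subgroup.normalClosure (D : Set G) ≤ (R1 : Subgroup G) := by
      refine (Subgroup.closure_le _).mpr ?_
      intro w hw
      obtain ⟨d, hd, hconj⟩ := Group.mem_conjugatesOfSet_iff.mp hw
      obtain ⟨c, hc⟩ := isConj_iff.mp hconj
      obtain ⟨⟨h, k⟩, hhk, -⟩ := hcomp.existsUnique c
      have hkN : (k : G) ∈ N := Subgroup.zpowers_le.mpr hgN k.2
      have hkd : (k : G) * d * (k : G)⁻¹ ∈ D := (Subgroup.mem_normalizer_iff.mp hkN d).mp hd
      have hw' : w = (h : G) * ((k : G) * d * (k : G)⁻¹) * (h : G)⁻¹ := by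
        rw [← hc, ← hhk]
        group
      rw [hw']
      exact (R1 : Subgroup G).mul_mem
        ((R1 : Subgroup G).mul_mem h.2 (inf_le_left (a := (R1 : Subgroup G)) hkd))
        ((R1 : Subgroup G).inv_mem h.2)
    have hKbot : Subgroup.normalClosure (D : Set G) ≠ ⊥ := by
      intro hEq
      apply hDbot
      rw [eq_bot_iff, ← hEq]
      exact Subgroup.le_normalClosure
    have htop := hsimple _ Subgroup.normalClosure_normal hKbot
    rw [htop] at hKR1
    have hcardR1 : Nat.card (R1 : Subgroup G) = Nat.card G := by
      rw [le_antisymm le_top hKR1, Subgroup.card_top]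
    rw [hsylqcard R1, hcard] at hcardR1
    nlinarith [hp.two_le, pow_pos hq.pos a]

theorem solvable_of_order_two_p_q_pow (G : Type*) [Group G] [Finite G]
    (p q : ℕ) (hp : p.Prime) (hq : q.Prime) (hpodd : Odd p) (hqodd : Odd q)
    (n : ℕ) (h : Nat.card G = 2 * p * q ^ n) :
    IsSolvable G := by
  haveI : Fact (Nat.Prime 2) := ⟨Nat.prime_two⟩
  have hp2 : p ≠ 2 := by
    rintro rfl
    simp [Nat.odd_iff] at hpodd
  have hq2 : q ≠ 2 := by
    rintro rfl
    simp [Nat.odd_iff] at hqodd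
  obtain ⟨P⟩ : Nonempty (Sylow 2 G) := inferInstance
  have hfact : (2 * p * q ^ n).factorization 2 = 1 := by
    rw [Nat.factorization_mul (Nat.mul_ne_zero two_ne_zero hp.pos.ne') (pow_ne_zero _ hq.pos.ne'),
      Nat.factorization_mul two_ne_zero hp.pos.ne', hq.factorization_pow]
    simp [Nat.prime_two.factorization, hp.factorization, Finsupp.single_apply,
      Ne.symm hp2, Ne.symm hq2, hp2, hq2]
  have hPcard : Nat.card P = 2 := by
    rw [Sylow.card_eq_multiplicity, h, hfact, pow_one]
  have hP : Subgroup.normalizer ((P : Subgroup G) : Set G) ≤ Subgroup.centralizer (P : Set G) := by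
    intro g hg
    rw [Subgroup.mem_centralizer_iff]
    intro t ht
    rcases eq_or_ne t 1 with rfl | ht1
    · simp
    · obtain ⟨z, -, hzuniq⟩ := (Nat.card_eq_two_iff' (1 : (P : Subgroup G))).mp hPcard
      have hconj : g * t * g⁻¹ ∈ (P : Subgroup G) :=
        (Subgroup.mem_normalizer_iff.mp hg t).mp ht
      have hconj1 : g * t * g⁻¹ ≠ 1 := by
        intro hEq
        apply ht1
        have : t = g⁻¹ * (g * t * g⁻¹) * g := by group
        rw [this, hEq]
        group
      have h1 : (⟨g * t * g⁻¹, hconj⟩ : (P : Subgroup G)) = z :=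
        hzuniq _ (by simpa using hconj1)
      have h2 : (⟨t, ht⟩ : (P : Subgroup G)) = z := hzuniq _ (by simpa using ht1)
      have h3 : g * t * g⁻¹ = t := by
        have := h1.trans h2.symm
        simpa using this
      calc t * g = g * (g⁻¹ * t * g) := by group
        _ = g * t := by
            congr 1
            have : g⁻¹ * (g * t * g⁻¹) * g = g⁻¹ * t * g := by rw [h3]
            simpa [mul_assoc] using this.symm
  have hcomp := MonoidHom.ker_transferSylow_isComplement' P hP
  have hkercard : Nat.card (MonoidHom.transferSylow P hP).ker = p * q ^ n := by
    have h1 := hcomp.card_mul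
    rw [hPcard] at h1
    have h2 : Nat.card (MonoidHom.transferSylow P hP).ker * 2 = p * q ^ n * 2 := by
      rw [h1, h]; ring
    exact Nat.eq_of_mul_eq_mul_right two_pos h2
  have hsolker : Group.IsSolvable (MonoidHom.transferSylow P hP).ker := by
    by_cases hpq : p = q
    · subst hpq
      have : Nat.card (MonoidHom.transferSylow P hP).ker = p ^ (n + 1) := by
        rw [hkercard, pow_succ, mul_comm]
      have hpg : IsPGroup p (MonoidHom.transferSylow P hP).ker := IsPGroup.of_card this
      haveI : Fact p.Prime := ⟨hp⟩
      haveI := hpg.isNilpotent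
      infer_instance
    · exact solvable_of_card_dvd_p_mul_q_pow hp hq hpq n _
        (MonoidHom.transferSylow P hP).ker inferInstance inferInstance hkercard
        (hkercard ▸ dvd_rfl)
  have hsolP : Group.IsSolvable (P : Subgroup G) := by
    have hpg : IsPGroup 2 (P : Subgroup G) := IsPGroup.of_card (by rw [hPcard, pow_one])
    haveI := hpg.isNilpotent
    infer_instance
  exact solvable_of_ker_le_range (MonoidHom.transferSylow P hP).ker.subtype
    (MonoidHom.transferSylow P hP) (by rw [Subgroup.range_subtype])
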